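/- Let f : [0,θ] → ℝ be Lipschitz continuous. Then Uf is Lipschitz continuous and s(Uf) ≤ q·s(f), where s(g) = sup_{x ≠ y} |g(x) − g(y)|/|x − y| denotes the least Lipschitz constant of g on [0,θ], and q = m·Σ_{i≥m} ( m/(i³(i+1)) + (i+1−m)/(i(i+1)³) ). -/

import Mathlib

open MeasureTheory Real Set

/-- θ = 1/√m. -/
noncomputable def theta (m : ℕ) : ℝ := 1 / Real.sqrt m

/-- u_i(x) = 1/(iθ + x). -/
noncomputable def uMap (m i : ℕ) (x : ℝ) : ℝ := 1 / (i * theta m + x)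

/-- P_i(x) = (1+θx)/((x+iθ)(x+(i+1)θ)). -/
noncomputable def Pfun (m i : ℕ) (x : ℝ) : ℝ :=
  (1 + theta m * x) / ((x + i * theta m) * (x + (i + 1) * theta m))

/-- The Perron-Frobenius operator Uf(x) = Σ_{i≥m} P_i(x)·f(u_i(x)). -/
noncomputable def Uop (m : ℕ) (f : ℝ → ℝ) (x : ℝ) : ℝ :=
  ∑' i : ℕ, Pfun m (i + m) x * f (uMap m (i + m) x)

/-- q = m·Σ_{i≥m} ( m/(i³(i+1)) + (i+1−m)/(i(i+1)³) ). -/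
noncomputable def qConst (m : ℕ) : ℝ :=
  m * ∑' i : ℕ,
    ((m : ℝ) / (((i + m : ℕ) : ℝ) ^ 3 * (((i + m : ℕ) : ℝ) + 1)) +
      ((((i + m : ℕ) : ℝ) + 1 - (m : ℝ)) /
        (((i + m : ℕ) : ℝ) * (((i + m : ℕ) : ℝ) + 1) ^ 3)))


section AuxLipschitz
open Filter Topology
set_option maxHeartbeats 1600000

lemma key2 (θ a b c x : ℝ) (hθ : 0 < θ) (hc : 2*θ ≤ c) (hca : c ≤ a) (hb : b = a + θ)
    (hx0 : 0 ≤ x) (hxθ : x ≤ θ) :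
    (x+c)/((x+a)^2*(x+b)) + (b-c)/((x+b)*b^2) ≤ c/(a^2*b) + (b-c)/b^3 := by
  have ha : 0 < a := by linarith
  have hbp : 0 < b := by rw [hb]; linarith
  have hxa : 0 < x + a := by linarith
  have hxb : 0 < x + b := by linarith
  have hcb : c ≤ b := by rw [hb]; linarith
  have hc0 : 0 < c := by linarith
  have hbc0 : 0 ≤ (b - c) * a^2 := mul_nonneg (by linarith) (sq_nonneg a)
  have hbr : 0 ≤ (b-c)*a^2*((x+a)^2 - b^2) + b^2*c*x^2 + b^2*c*(2*a+b)*x + 2*a*b^3*c := by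
    have h1 : -(θ*(x+a+b)) ≤ (x+a)^2 - b^2 := by nlinarith
    have hm1 : -((b-c)*a^2*(θ*(x+a+b))) ≤ (b-c)*a^2*((x+a)^2 - b^2) := by nlinarith
    have hba : (b-c)*a^2 ≤ b^3 := by
      nlinarith [mul_nonneg hbp.le (by nlinarith : (0:ℝ) ≤ b^2 - a^2),
        mul_nonneg hc0.le (sq_nonneg a)]
    have h3 : 3*θ*((b-c)*a^2) ≤ 2*c*b^3 := by
      nlinarith [mul_nonneg (by linarith : (0:ℝ) ≤ 3*θ) (by linarith : (0:ℝ) ≤ b^3 - (b-c)*a^2),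
        mul_nonneg (by linarith : (0:ℝ) ≤ 2*c - 3*θ) (by positivity : (0:ℝ) ≤ b^3)]
    have h4 : (b-c)*a^2*(θ*(x+a+b)) ≤ 3*θ*((b-c)*a^2)*a := by
      nlinarith [mul_nonneg (mul_nonneg hbc0 hθ.le) (by linarith : (0:ℝ) ≤ 3*a - (x+a+b))]
    have h5 : 3*θ*((b-c)*a^2)*a ≤ 2*c*b^3*a := by nlinarith
    nlinarith [mul_nonneg (mul_nonneg (sq_nonneg b) hc0.le) (sq_nonneg x),
      mul_nonneg (mul_nonneg (mul_nonneg (sq_nonneg b) hc0.le) (by linarith : (0:ℝ) ≤ 2*a+b)) hx0]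
  have hdiff : c/(a^2*b) + (b-c)/b^3 - ((x+c)/((x+a)^2*(x+b)) + (b-c)/((x+b)*b^2))
      = x * ((b-c)*a^2*((x+a)^2 - b^2) + b^2*c*x^2 + b^2*c*(2*a+b)*x + 2*a*b^3*c)
        / (a^2*b^3*(x+a)^2*(x+b)) := by
    field_simp
    ring
  have hpos : 0 ≤ x * ((b-c)*a^2*((x+a)^2 - b^2) + b^2*c*x^2 + b^2*c*(2*a+b)*x + 2*a*b^3*c)
        / (a^2*b^3*(x+a)^2*(x+b)) := by
    apply div_nonneg (mul_nonneg hx0 hbr)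
    positivity
  linarith

lemma key_xy (θ a b c x y : ℝ) (hθ : 0 < θ) (hc : 2*θ ≤ c) (hca : c ≤ a) (hb : b = a + θ)
    (hx0 : 0 ≤ x) (hxθ : x ≤ θ) (hy0 : 0 ≤ y) :
    θ*(x+c)/((x+a)^2*(x+b)*(y+a)) + θ*(b-c)/((x+b)*(y+b)^2*(y+a))
      ≤ θ*c/(a^3*b) + θ*(b-c)/(a*b^3) := by
  have ha : 0 < a := by linarith
  have hbp : 0 < b := by rw [hb]; linarith
  have hxa : 0 < x + a := by linarith
  have hxb : 0 < x + b := by linarith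
  have hcb : c ≤ b := by rw [hb]; linarith
  have hc0 : 0 < c := by linarith
  have step1 : θ*(x+c)/((x+a)^2*(x+b)*(y+a)) + θ*(b-c)/((x+b)*(y+b)^2*(y+a))
      ≤ θ*(x+c)/((x+a)^2*(x+b)*a) + θ*(b-c)/((x+b)*b^2*a) := by
    gcongr <;> first
      | positivity
      | nlinarith [mul_nonneg hθ.le (by linarith : (0:ℝ) ≤ b - c)]
  have hK := key2 θ a b c x hθ hc hca hb hx0 hxθ
  have step2 : θ*(x+c)/((x+a)^2*(x+b)*a) + θ*(b-c)/((x+b)*b^2*a)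
      ≤ θ*c/(a^3*b) + θ*(b-c)/(a*b^3) := by
    have h := mul_le_mul_of_nonneg_left hK (by positivity : (0:ℝ) ≤ θ/a)
    have e1 : θ*(x+c)/((x+a)^2*(x+b)*a) + θ*(b-c)/((x+b)*b^2*a)
        = θ/a * ((x+c)/((x+a)^2*(x+b)) + (b-c)/((x+b)*b^2)) := by
      field_simp
    have e2 : θ*c/(a^3*b) + θ*(b-c)/(a*b^3)
        = θ/a * (c/(a^2*b) + (b-c)/b^3) := by
      field_simp
    rw [e1, e2]; exact h
  linarith

lemma theta_pos {m : ℕ} (hm : 2 ≤ m) : 0 < theta m := by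
  have hm0 : (0:ℝ) < m := by exact_mod_cast lt_of_lt_of_le Nat.zero_lt_two hm
  have : (0:ℝ) < Real.sqrt m := Real.sqrt_pos.2 hm0
  rw [theta]; positivity

lemma theta_sq {m : ℕ} (hm : 2 ≤ m) : (m : ℝ) * (theta m)^2 = 1 := by
  have hm0 : (0:ℝ) < m := by exact_mod_cast lt_of_lt_of_le Nat.zero_lt_two hm
  have h : Real.sqrt m ^ 2 = (m:ℝ) := Real.sq_sqrt hm0.le
  have hs : Real.sqrt m ≠ 0 := by
    intro h0
    rw [h0] at h
    simp at h
    linarith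
  rw [theta]
  field_simp
  exact h.symm

lemma term_bound (m : ℕ) (θ iR x y : ℝ) (hm : (2:ℝ) ≤ m) (hi : (m:ℝ) ≤ iR)
    (hθ : 0 < θ) (hmθ : (m:ℝ) * θ^2 = 1)
    (hx0 : 0 ≤ x) (hxθ : x ≤ θ) (hy0 : 0 ≤ y) :
    (1 + θ*x)/((x+iR*θ)^2*(x+(iR+1)*θ)*(y+iR*θ))
      + ((iR+1)*θ^2-1)/((x+(iR+1)*θ)*(y+(iR+1)*θ)^2*(y+iR*θ))
      ≤ (m:ℝ)^2/(iR^3*(iR+1)) + (m:ℝ)*(iR+1-(m:ℝ))/(iR*(iR+1)^3) := by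
  have hmpos : (0:ℝ) < m := by linarith
  have hiR : (0:ℝ) < iR := by linarith
  have hK := key_xy θ (iR*θ) ((iR+1)*θ) ((m:ℝ)*θ) x y hθ
    (by nlinarith) (by nlinarith) (by ring) hx0 hxθ hy0
  have e1 : 1 + θ*x = θ*(x + (m:ℝ)*θ) := by linear_combination -hmθ
  have e2 : (iR+1)*θ^2-1 = θ*((iR+1)*θ - (m:ℝ)*θ) := by linear_combination hmθ
  have hbpos : 0 < (iR+1)*θ := by positivity
  have hapos : 0 < iR*θ := by positivity
  have e3 : θ*((m:ℝ)*θ)/((iR*θ)^3*((iR+1)*θ)) = (m:ℝ)^2/(iR^3*(iR+1)) := by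
    rw [div_eq_div_iff (by positivity) (by positivity)]
    linear_combination (-(m:ℝ)*iR^3*(iR+1)*θ^2) * hmθ
  have e4 : θ*((iR+1)*θ - (m:ℝ)*θ)/((iR*θ)*((iR+1)*θ)^3) = (m:ℝ)*(iR+1-(m:ℝ))/(iR*(iR+1)^3) := by
    rw [div_eq_div_iff (by positivity) (by positivity)]
    linear_combination (-iR*(iR+1)^3*(iR+1-(m:ℝ))*θ^2) * hmθ
  rw [e1, e2, ← e3, ← e4]
  exact hK

lemma Pdiff (θ iR x y : ℝ) (hθ : θ ≠ 0) (h1 : x + iR*θ ≠ 0) (h2 : x+(iR+1)*θ ≠ 0)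
    (h3 : y + iR*θ ≠ 0) (h4 : y+(iR+1)*θ ≠ 0) :
    (1+θ*x)/((x+iR*θ)*(x+(iR+1)*θ)) - (1+θ*y)/((y+iR*θ)*(y+(iR+1)*θ))
      = (x-y)*(iR*θ^2-1)/(θ*(x+iR*θ)*(y+iR*θ))
        - (x-y)*((iR+1)*θ^2-1)/(θ*(x+(iR+1)*θ)*(y+(iR+1)*θ)) := by
  rw [div_sub_div _ _ (mul_ne_zero h1 h2) (mul_ne_zero h3 h4),
    div_sub_div _ _ (mul_ne_zero (mul_ne_zero hθ h1) h3) (mul_ne_zero (mul_ne_zero hθ h2) h4),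
    div_eq_div_iff (mul_ne_zero (mul_ne_zero h1 h2) (mul_ne_zero h3 h4))
      (mul_ne_zero (mul_ne_zero (mul_ne_zero hθ h1) h3) (mul_ne_zero (mul_ne_zero hθ h2) h4))]
  ring

lemma udiff (c x y : ℝ) (h1 : c + x ≠ 0) (h2 : c + y ≠ 0) :
    1/(c+x) - 1/(c+y) = (y-x)/((c+x)*(c+y)) := by
  field_simp
  ring

lemma udiff2 (a b z : ℝ) (h1 : a+z ≠ 0) (h2 : b+z ≠ 0) :
    1/(a+z) - 1/(b+z) = (b-a)/((a+z)*(b+z)) := by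
  field_simp
  ring

lemma summable_aux {F : ℕ → ℝ} {C : ℝ} (h : ∀ j, |F j| ≤ C / ((j:ℝ)+1)^2) :
    Summable F := by
  have hbase : Summable (fun j : ℕ => C / ((j:ℝ)+1)^2) := by
    have h1 : Summable (fun j : ℕ => 1 / ((j:ℝ)+1)^2) := by
      have := (Real.summable_one_div_nat_pow (p := 2)).2 (by norm_num)
      have h2 := (summable_nat_add_iff 1).2 this
      refine h2.congr fun n => ?_
      push_cast
      ring
    simpa [div_eq_mul_inv, mul_comm, mul_assoc] using h1.mul_left C
  refine Summable.of_norm ?_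
  refine Summable.of_nonneg_of_le (fun j => norm_nonneg _) (fun j => ?_) hbase
  simpa using h j

noncomputable def Dfun (m : ℕ) (x y : ℝ) (i : ℕ) : ℝ :=
  (x - y) * ((i:ℝ) * (theta m)^2 - 1) / (theta m * (x + i * theta m) * (y + i * theta m))

lemma uMem (m i : ℕ) (z : ℝ) (hm : 2 ≤ m) (hi : m ≤ i) (hz : z ∈ Icc 0 (theta m)) :
    uMap m i z ∈ Icc 0 (theta m) := by
  have hθ := theta_pos hm
  have hmθ := theta_sq hm
  have hmi : (m:ℝ) ≤ (i:ℝ) := by exact_mod_cast hi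
  have hm2 : (2:ℝ) ≤ (m:ℝ) := by exact_mod_cast hm
  obtain ⟨hz0, hzθ⟩ := hz
  have hden : 0 < (i:ℝ) * theta m + z := by nlinarith
  constructor
  · exact le_of_lt (by rw [uMap]; positivity)
  · rw [uMap, div_le_iff₀ hden]
    nlinarith [sq_nonneg (theta m)]

lemma gterm_bound (m : ℕ) (f : ℝ → ℝ) (K x y : ℝ) (hm : 2 ≤ m) (hK : 0 ≤ K)
    (hf : ∀ u ∈ Icc 0 (theta m), ∀ v ∈ Icc 0 (theta m), |f u - f v| ≤ K * |u - v|)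
    (hx : x ∈ Icc 0 (theta m)) (hy : y ∈ Icc 0 (theta m)) (j : ℕ) :
    |Pfun m (j+m) x * (f (uMap m (j+m) x) - f (uMap m (j+m) y))
        + Dfun m x y (j+m+1) * (f (uMap m (j+m+1) y) - f (uMap m (j+m) y))|
      ≤ K * |x-y| * ((m:ℝ)^2/(((j+m:ℕ):ℝ)^3*(((j+m:ℕ):ℝ)+1))
          + (m:ℝ)*((((j+m:ℕ):ℝ)+1-(m:ℝ)))/(((j+m:ℕ):ℝ)*(((j+m:ℕ):ℝ)+1)^3)) := by
  have hθ := theta_pos hm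
  have hmθ := theta_sq hm
  have hm2 : (2:ℝ) ≤ (m:ℝ) := by exact_mod_cast hm
  obtain ⟨hx0, hxθ⟩ := hx
  obtain ⟨hy0, hyθ⟩ := hy
  set θ := theta m with hθdef
  set iR : ℝ := ((j+m:ℕ):ℝ) with hiRdef
  have hiR : (m:ℝ) ≤ iR := by rw [hiRdef]; push_cast; linarith [Nat.cast_nonneg (α := ℝ) j]
  have hiR1 : ((j+m+1:ℕ):ℝ) = iR + 1 := by rw [hiRdef]; push_cast; ring
  have hiR2 : (2:ℝ) ≤ iR := le_trans hm2 hiR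
  -- positivity
  have hc1 : 0 < iR*θ + x := by nlinarith
  have hc2 : 0 < iR*θ + y := by nlinarith
  have he : 0 < (iR+1)*θ + y := by nlinarith
  have hd1 : 0 < x + iR*θ := by linarith
  have hd2 : 0 < x + (iR+1)*θ := by nlinarith
  have hd3 : 0 < y + iR*θ := by linarith
  have hd4 : 0 < y + (iR+1)*θ := by linarith
  -- memberships
  have hux : uMap m (j+m) x ∈ Icc 0 θ := uMem m (j+m) x hm (Nat.le_add_left m j) ⟨hx0, hxθ⟩
  have huy : uMap m (j+m) y ∈ Icc 0 θ := uMem m (j+m) y hm (Nat.le_add_left m j) ⟨hy0, hyθ⟩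
  have huy1 : uMap m (j+m+1) y ∈ Icc 0 θ :=
    uMem m (j+m+1) y hm (le_trans (Nat.le_add_left m j) (Nat.le_succ _)) ⟨hy0, hyθ⟩
  -- difference formulas
  have hu1 : uMap m (j+m) x - uMap m (j+m) y = (y-x)/((iR*θ+x)*(iR*θ+y)) := by
    rw [uMap, uMap, ← hiRdef]
    exact udiff (iR*θ) x y (ne_of_gt hc1) (ne_of_gt hc2)
  have hu2 : uMap m (j+m+1) y - uMap m (j+m) y = (iR*θ-(iR+1)*θ)/(((iR+1)*θ+y)*(iR*θ+y)) := by
    rw [uMap, uMap, ← hiRdef, hiR1]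
    exact udiff2 ((iR+1)*θ) (iR*θ) y (ne_of_gt he) (ne_of_gt hc2)
  -- abs bounds on f-differences
  have hΔ1 : |f (uMap m (j+m) x) - f (uMap m (j+m) y)| ≤ K * (|x-y|/((iR*θ+x)*(iR*θ+y))) := by
    refine le_trans (hf _ hux _ huy) ?_
    rw [hu1, abs_div, abs_of_pos (by positivity : (0:ℝ) < (iR*θ+x)*(iR*θ+y)), abs_sub_comm]
  have hΔ2 : |f (uMap m (j+m+1) y) - f (uMap m (j+m) y)| ≤ K * (θ/(((iR+1)*θ+y)*(iR*θ+y))) := by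
    refine le_trans (hf _ huy1 _ huy) ?_
    rw [hu2, abs_div, abs_of_pos (by positivity : (0:ℝ) < ((iR+1)*θ+y)*(iR*θ+y))]
    have : |iR*θ-(iR+1)*θ| = θ := by
      rw [abs_sub_comm]
      rw [abs_of_pos (by nlinarith : (0:ℝ) < (iR+1)*θ - iR*θ)]
      ring
    rw [this]
  -- |Dfun| computation
  have hDnum : 0 ≤ (iR+1)*θ^2 - 1 := by nlinarith
  have hDabs : |Dfun m x y (j+m+1)| = |x-y| * (((iR+1)*θ^2-1)/(θ*(x+(iR+1)*θ)*(y+(iR+1)*θ))) := by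
    rw [Dfun, ← hθdef, hiR1]
    rw [abs_div, abs_mul, abs_of_nonneg hDnum,
      abs_of_pos (by positivity : (0:ℝ) < θ*(x+(iR+1)*θ)*(y+(iR+1)*θ))]
    ring
  -- P nonneg
  have hPnn : 0 ≤ Pfun m (j+m) x := by
    rw [Pfun, ← hθdef, ← hiRdef]
    have : ((j+m:ℕ):ℝ) + 1 = iR + 1 := by rw [hiRdef]
    positivity
  have hPval : Pfun m (j+m) x = (1+θ*x)/((x+iR*θ)*(x+(iR+1)*θ)) := by
    rw [Pfun, ← hθdef, ← hiRdef]
  -- combine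
  have habs : |Pfun m (j+m) x * (f (uMap m (j+m) x) - f (uMap m (j+m) y))
        + Dfun m x y (j+m+1) * (f (uMap m (j+m+1) y) - f (uMap m (j+m) y))|
      ≤ Pfun m (j+m) x * (K * (|x-y|/((iR*θ+x)*(iR*θ+y))))
        + |Dfun m x y (j+m+1)| * (K * (θ/(((iR+1)*θ+y)*(iR*θ+y)))) := by
    refine le_trans (abs_add_le _ _) ?_
    rw [abs_mul, abs_mul, abs_of_nonneg hPnn]
    exact add_le_add (mul_le_mul_of_nonneg_left hΔ1 hPnn)
      (mul_le_mul_of_nonneg_left hΔ2 (abs_nonneg _))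
  have heq : Pfun m (j+m) x * (K * (|x-y|/((iR*θ+x)*(iR*θ+y))))
        + |Dfun m x y (j+m+1)| * (K * (θ/(((iR+1)*θ+y)*(iR*θ+y))))
      = (K * |x-y|) * ((1 + θ*x)/((x+iR*θ)^2*(x+(iR+1)*θ)*(y+iR*θ))
          + ((iR+1)*θ^2-1)/((x+(iR+1)*θ)*(y+(iR+1)*θ)^2*(y+iR*θ))) := by
    rw [hDabs, hPval]
    field_simp
    ring
  have hTB := term_bound m θ iR x y hm2 hiR hθ hmθ hx0 hxθ hy0
  calc |Pfun m (j+m) x * (f (uMap m (j+m) x) - f (uMap m (j+m) y))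
        + Dfun m x y (j+m+1) * (f (uMap m (j+m+1) y) - f (uMap m (j+m) y))|
      ≤ (K * |x-y|) * ((1 + θ*x)/((x+iR*θ)^2*(x+(iR+1)*θ)*(y+iR*θ))
          + ((iR+1)*θ^2-1)/((x+(iR+1)*θ)*(y+(iR+1)*θ)^2*(y+iR*θ))) := by
        rw [← heq]; exact habs
    _ ≤ (K * |x-y|) * ((m:ℝ)^2/(iR^3*(iR+1)) + (m:ℝ)*(iR+1-(m:ℝ))/(iR*(iR+1)^3)) :=
        mul_le_mul_of_nonneg_left hTB (by positivity)
    _ = K * |x-y| * ((m:ℝ)^2/(iR^3*(iR+1)) + (m:ℝ)*((iR+1-(m:ℝ)))/(iR*(iR+1)^3)) := by ring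

/-- If f is Lipschitz on [0,θ] with constant K, then Uf is Lipschitz with
constant q·K; that is, s(Uf) ≤ q·s(f). -/
theorem Uop_lipschitz_contraction (m : ℕ) (hm : 2 ≤ m) (hns : ¬ IsSquare m)
    (f : ℝ → ℝ) (K : ℝ) (hK : 0 ≤ K)
    (hf : ∀ x ∈ Icc 0 (theta m), ∀ y ∈ Icc 0 (theta m), |f x - f y| ≤ K * |x - y|) :
    ∀ x ∈ Icc 0 (theta m), ∀ y ∈ Icc 0 (theta m),
      |Uop m f x - Uop m f y| ≤ qConst m * K * |x - y| := by
  intro x hx y hy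
  have hθ := theta_pos hm
  have hmθ := theta_sq hm
  have hm2 : (2:ℝ) ≤ (m:ℝ) := by exact_mod_cast hm
  have hθ2 : (theta m)^2 ≤ 1/2 := by nlinarith [sq_nonneg (theta m)]
  have hθ1 : theta m ≤ 1 := by nlinarith
  obtain ⟨hx0, hxθ⟩ := hx
  obtain ⟨hy0, hyθ⟩ := hy
  set θ := theta m with hθdef
  -- bound for f on the interval
  set M : ℝ := |f 0| + K * θ with hMdef
  have hM0 : 0 ≤ M := by positivity
  have hfb : ∀ u ∈ Icc 0 θ, |f u| ≤ M := by
    intro u hu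
    have h0 : (0:ℝ) ∈ Icc 0 θ := ⟨le_refl 0, hθ.le⟩
    have h1 := hf u hu 0 h0
    have h2 : |u - 0| ≤ θ := by
      rw [sub_zero, abs_of_nonneg hu.1]; exact hu.2
    have h3 : |f u - f 0| ≤ K * θ := le_trans h1 (mul_le_mul_of_nonneg_left h2 hK)
    calc |f u| = |(f u - f 0) + f 0| := by ring_nf
      _ ≤ |f u - f 0| + |f 0| := abs_add_le _ _
      _ ≤ M := by rw [hMdef]; linarith
  -- index facts
  have hcast : ∀ j : ℕ, ((j+m:ℕ):ℝ) = (j:ℝ) + (m:ℝ) := fun j => by push_cast; ring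
  have hiRm : ∀ j : ℕ, (m:ℝ) ≤ ((j+m:ℕ):ℝ) := fun j => by
    rw [hcast]; linarith [Nat.cast_nonneg (α := ℝ) j]
  have hiRj : ∀ j : ℕ, (j:ℝ) + 1 ≤ ((j+m:ℕ):ℝ) := fun j => by rw [hcast]; linarith
  have hiR2 : ∀ j : ℕ, (2:ℝ) ≤ ((j+m:ℕ):ℝ) := fun j => le_trans hm2 (hiRm j)
  -- positivity of denominators
  have hpos : ∀ (j : ℕ) (z : ℝ), 0 ≤ z → 0 < z + ((j+m:ℕ):ℝ)*θ :=
    fun j z hz => by nlinarith [hiR2 j]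
  have hpos1 : ∀ (j : ℕ) (z : ℝ), 0 ≤ z → 0 < z + (((j+m:ℕ):ℝ)+1)*θ :=
    fun j z hz => by nlinarith [hiR2 j]
  -- Pfun bounds
  have hPnn : ∀ (j : ℕ) (z : ℝ), 0 ≤ z → 0 ≤ Pfun m (j+m) z := by
    intro j z hz
    rw [Pfun, ← hθdef]
    have h1 := hpos j z hz
    have h2 := hpos1 j z hz
    positivity
  have hPle : ∀ (j : ℕ) (z : ℝ), 0 ≤ z → z ≤ θ → Pfun m (j+m) z ≤ 2*(m:ℝ)/((j:ℝ)+1)^2 := by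
    intro j z hz0 hzθ
    rw [Pfun, ← hθdef]
    have h1 := hpos j z hz0
    have h2 := hpos1 j z hz0
    have hnum : 1 + θ*z ≤ 2 := by nlinarith
    have hden : (((j:ℝ)+1)*θ)*(((j:ℝ)+1)*θ) ≤ (z + ((j+m:ℕ):ℝ)*θ)*(z + (((j+m:ℕ):ℝ)+1)*θ) := by
      have h3 := hiRj j
      have ha : ((j:ℝ)+1)*θ ≤ z + ((j+m:ℕ):ℝ)*θ := by nlinarith
      have hb : ((j:ℝ)+1)*θ ≤ z + (((j+m:ℕ):ℝ)+1)*θ := by nlinarith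
      exact mul_le_mul ha hb (by positivity) h1.le
    calc (1 + θ*z)/((z + ((j+m:ℕ):ℝ)*θ)*(z + (((j+m:ℕ):ℝ)+1)*θ))
        ≤ 2/((((j:ℝ)+1)*θ)*(((j:ℝ)+1)*θ)) :=
          div_le_div₀ (by norm_num) hnum (by positivity) hden
      _ = 2*(m:ℝ)/((j:ℝ)+1)^2 := by
          rw [div_eq_div_iff (by positivity) (by positivity)]
          linear_combination (-2*((j:ℝ)+1)^2) * hmθ

  -- sequences
  set px : ℕ → ℝ := fun j => Pfun m (j+m) x * f (uMap m (j+m) x) with hpxdef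
  set py : ℕ → ℝ := fun j => Pfun m (j+m) y * f (uMap m (j+m) y) with hpydef
  set g : ℕ → ℝ := fun j => Pfun m (j+m) x * (f (uMap m (j+m) x) - f (uMap m (j+m) y))
      + Dfun m x y (j+m+1) * (f (uMap m (j+m+1) y) - f (uMap m (j+m) y)) with hgdef
  set E : ℕ → ℝ := fun j => Dfun m x y (j+m) * f (uMap m (j+m) y) with hEdef
  set sfun : ℕ → ℝ := fun j =>
    ((m : ℝ) / (((j + m : ℕ) : ℝ) ^ 3 * (((j + m : ℕ) : ℝ) + 1)) +
      ((((j + m : ℕ) : ℝ) + 1 - (m : ℝ)) /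
        (((j + m : ℕ) : ℝ) * (((j + m : ℕ) : ℝ) + 1) ^ 3))) with hsfundef
  -- memberships
  have hux : ∀ j, uMap m (j+m) x ∈ Icc 0 θ :=
    fun j => uMem m (j+m) x hm (Nat.le_add_left m j) ⟨hx0, hxθ⟩
  have huy : ∀ j, uMap m (j+m) y ∈ Icc 0 θ :=
    fun j => uMem m (j+m) y hm (Nat.le_add_left m j) ⟨hy0, hyθ⟩
  -- summability of the two basic series
  have hsx : Summable px := by
    apply summable_aux (C := 2*(m:ℝ)*M)
    intro j
    have h1 : |px j| = Pfun m (j+m) x * |f (uMap m (j+m) x)| := by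
      simp only [hpxdef]
      rw [abs_mul, abs_of_nonneg (hPnn j x hx0)]
    rw [h1]
    calc Pfun m (j+m) x * |f (uMap m (j+m) x)| ≤ (2*(m:ℝ)/((j:ℝ)+1)^2) * M :=
        mul_le_mul (hPle j x hx0 hxθ) (hfb _ (hux j)) (abs_nonneg _) (by positivity)
      _ = 2*(m:ℝ)*M/((j:ℝ)+1)^2 := by ring
  have hsy : Summable py := by
    apply summable_aux (C := 2*(m:ℝ)*M)
    intro j
    have h1 : |py j| = Pfun m (j+m) y * |f (uMap m (j+m) y)| := by
      simp only [hpydef]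
      rw [abs_mul, abs_of_nonneg (hPnn j y hy0)]
    rw [h1]
    calc Pfun m (j+m) y * |f (uMap m (j+m) y)| ≤ (2*(m:ℝ)/((j:ℝ)+1)^2) * M :=
        mul_le_mul (hPle j y hy0 hyθ) (hfb _ (huy j)) (abs_nonneg _) (by positivity)
      _ = 2*(m:ℝ)*M/((j:ℝ)+1)^2 := by ring
  -- bound on g
  have hgb : ∀ j, |g j| ≤ (K* |x - y|) * ((m:ℝ) * sfun j) := by
    intro j
    have h := gterm_bound m f K x y hm hK hf ⟨hx0, hxθ⟩ ⟨hy0, hyθ⟩ j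
    have h2 : |g j| ≤ K * |x - y| * ((m:ℝ)^2/(((j+m:ℕ):ℝ)^3*(((j+m:ℕ):ℝ)+1))
          + (m:ℝ)*((((j+m:ℕ):ℝ)+1-(m:ℝ)))/(((j+m:ℕ):ℝ)*(((j+m:ℕ):ℝ)+1)^3)) := by
      simpa only [hgdef] using h
    refine le_trans h2 (le_of_eq ?_)
    simp only [hsfundef]
    ring
  -- bound on m * sfun
  have hms : ∀ j : ℕ, (m:ℝ) * sfun j ≤ ((m:ℝ)^2+(m:ℝ))/((j:ℝ)+1)^2 := by
    intro j
    have hj1 : ((j:ℝ)+1) ≤ ((j+m:ℕ):ℝ) := hiRj j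
    have hi2 : (2:ℝ) ≤ ((j+m:ℕ):ℝ) := hiR2 j
    have hjpos : (0:ℝ) < (j:ℝ)+1 := by positivity
    have hipos : (0:ℝ) < ((j+m:ℕ):ℝ) := by linarith
    have hb1 : (m:ℝ)^2/(((j+m:ℕ):ℝ)^3*(((j+m:ℕ):ℝ)+1)) ≤ (m:ℝ)^2/((j:ℝ)+1)^2 := by
      apply div_le_div₀ (by positivity) (le_refl _) (by positivity)
      have e0 : ((j:ℝ)+1)^2 ≤ ((j+m:ℕ):ℝ)^2 := pow_le_pow_left₀ (by positivity) hj1 2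
      nlinarith [e0, sq_nonneg ((j+m:ℕ):ℝ)]
    have hnum2 : ((j+m:ℕ):ℝ)+1-(m:ℝ) = (j:ℝ)+1 := by rw [hcast]; ring
    have hb2 : (m:ℝ)*((((j+m:ℕ):ℝ)+1-(m:ℝ)))/(((j+m:ℕ):ℝ)*(((j+m:ℕ):ℝ)+1)^3)
        ≤ (m:ℝ)/((j:ℝ)+1)^2 := by
      rw [hnum2, div_le_div_iff₀ (by positivity) (by positivity)]
      have hc3 : ((j:ℝ)+1)^3 ≤ (((j+m:ℕ):ℝ)+1)^3 :=
        pow_le_pow_left₀ (by positivity) (by linarith) 3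
      have e1 : (m:ℝ)*((j:ℝ)+1)^3 ≤ (m:ℝ)*(((j+m:ℕ):ℝ)+1)^3 :=
        mul_le_mul_of_nonneg_left hc3 (by positivity)
      have e2 : (m:ℝ)*(((j+m:ℕ):ℝ)+1)^3 ≤ (m:ℝ)*(((j+m:ℕ):ℝ)*((((j+m:ℕ):ℝ)+1)^3)) := by
        have h1 : (((j+m:ℕ):ℝ)+1)^3 ≤ ((j+m:ℕ):ℝ)*(((j+m:ℕ):ℝ)+1)^3 :=
          le_mul_of_one_le_left (by positivity) (by linarith)
        exact mul_le_mul_of_nonneg_left h1 (by positivity)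
      nlinarith [e1, e2]
    have : (m:ℝ) * sfun j = (m:ℝ)^2/(((j+m:ℕ):ℝ)^3*(((j+m:ℕ):ℝ)+1))
        + (m:ℝ)*((((j+m:ℕ):ℝ)+1-(m:ℝ)))/(((j+m:ℕ):ℝ)*(((j+m:ℕ):ℝ)+1)^3) := by
      simp only [hsfundef]; ring
    rw [this]
    calc _ ≤ (m:ℝ)^2/((j:ℝ)+1)^2 + (m:ℝ)/((j:ℝ)+1)^2 := add_le_add hb1 hb2
      _ = ((m:ℝ)^2+(m:ℝ))/((j:ℝ)+1)^2 := by ring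
  have hsg : Summable g := by
    apply summable_aux (C := K* |x - y| *((m:ℝ)^2+(m:ℝ)))
    intro j
    refine le_trans (hgb j) ?_
    calc (K* |x - y|) * ((m:ℝ)*sfun j) ≤ (K* |x - y|) * (((m:ℝ)^2+(m:ℝ))/((j:ℝ)+1)^2) :=
        mul_le_mul_of_nonneg_left (hms j) (by positivity)
      _ = K* |x - y| *((m:ℝ)^2+(m:ℝ))/((j:ℝ)+1)^2 := by ring
  have hsfnn : ∀ j, 0 ≤ sfun j := by
    intro j
    have hj1 : ((j:ℝ)+1) ≤ ((j+m:ℕ):ℝ) := hiRj j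
    have hnum2 : ((j+m:ℕ):ℝ)+1-(m:ℝ) = (j:ℝ)+1 := by rw [hcast]; ring
    have hipos : (0:ℝ) < ((j+m:ℕ):ℝ) := by positivity
    simp only [hsfundef]
    rw [hnum2]
    positivity
  have hssum : Summable sfun := by
    apply summable_aux (C := (m:ℝ)+1)
    intro j
    have h := hms j
    have hm0 : (0:ℝ) < (m:ℝ) := by linarith
    rw [abs_of_nonneg (hsfnn j)]
    have heq : ((m:ℝ)^2+(m:ℝ))/((j:ℝ)+1)^2 = (m:ℝ) * (((m:ℝ)+1)/((j:ℝ)+1)^2) := by ring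
    rw [heq] at h
    exact le_of_mul_le_mul_left h hm0
  -- telescoping identity
  have hPd : ∀ j : ℕ, Pfun m (j+m) x - Pfun m (j+m) y
      = Dfun m x y (j+m) - Dfun m x y (j+m+1) := by
    intro j
    have hiden := Pdiff θ ((j+m:ℕ):ℝ) x y (ne_of_gt hθ) (ne_of_gt (hpos j x hx0))
      (ne_of_gt (hpos1 j x hx0)) (ne_of_gt (hpos j y hy0)) (ne_of_gt (hpos1 j y hy0))
    simp only [Pfun, Dfun, ← hθdef]
    push_cast
    push_cast at hiden
    linear_combination hiden
  have hEtel : ∀ j : ℕ, (px j - py j) - g j = E j - E (j+1) := by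
    intro j
    have h := hPd j
    have hE1 : E (j+1) = Dfun m x y (j+m+1) * f (uMap m (j+m+1) y) := by
      simp only [hEdef]
      rw [show j+1+m = j+m+1 from by omega]
    simp only [hpxdef, hpydef, hgdef, hEdef]
    rw [show j+1+m = j+m+1 from by omega]
    linear_combination (f (uMap m (j+m) y)) * h
  have htel : ∀ n : ℕ, ∑ j ∈ Finset.range n, (px j - py j)
      = (∑ j ∈ Finset.range n, g j) + (E 0 - E n) := by
    intro n
    have h1 : ∀ j ∈ Finset.range n, px j - py j = g j + (E j - E (j+1)) :=
      fun j _ => by linarith [hEtel j]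
    rw [Finset.sum_congr rfl h1, Finset.sum_add_distrib, Finset.sum_range_sub']
  have hE0 : E 0 = 0 := by
    simp only [hEdef]
    have h0 : Dfun m x y (0+m) = 0 := by
      rw [Dfun, show ((0+m : ℕ):ℝ) = (m:ℝ) from by push_cast; ring, ← hθdef, hmθ]
      simp
    rw [h0, zero_mul]
  have hEb : ∀ n : ℕ, ‖E n‖ ≤ (M * |x - y| / θ) / ((n:ℝ)+1) := by
    intro n
    have hD : |Dfun m x y (n+m)| ≤ |x - y| / (θ * ((n:ℝ)+1)) := by
      rw [Dfun, ← hθdef]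
      have hn1 : ((n:ℝ)+1) ≤ ((n+m:ℕ):ℝ) := hiRj n
      have hnum : 0 ≤ ((n+m:ℕ):ℝ)*θ^2 - 1 := by nlinarith [hiRm n]
      have hd1 : 0 < x + ((n+m:ℕ):ℝ)*θ := by nlinarith [hiR2 n]
      have hd2 : 0 < y + ((n+m:ℕ):ℝ)*θ := by nlinarith [hiR2 n]
      rw [abs_div, abs_mul, abs_of_nonneg hnum,
        abs_of_pos (by positivity : (0:ℝ) < θ*(x + ((n+m:ℕ):ℝ)*θ)*(y + ((n+m:ℕ):ℝ)*θ)),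
        div_le_div_iff₀ (by positivity) (by positivity)]
      have key : (((n+m:ℕ):ℝ)*θ^2 - 1) * (θ*((n:ℝ)+1)) ≤ θ*(x + ((n+m:ℕ):ℝ)*θ)*(y + ((n+m:ℕ):ℝ)*θ) := by
        nlinarith [mul_nonneg hθ.le (mul_nonneg (sub_nonneg.2 hn1) hnum),
          mul_nonneg hθ.le (by positivity : (0:ℝ) ≤ ((n+m:ℕ):ℝ)),
          mul_nonneg (mul_nonneg hθ.le hx0) hy0,
          mul_nonneg (mul_nonneg hθ.le hx0) (by positivity : (0:ℝ) ≤ ((n+m:ℕ):ℝ)*θ),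
          mul_nonneg (mul_nonneg hθ.le hy0) (by positivity : (0:ℝ) ≤ ((n+m:ℕ):ℝ)*θ)]
      nlinarith [key, abs_nonneg (x - y), mul_le_mul_of_nonneg_left key (abs_nonneg (x - y))]
    have hEn : ‖E n‖ = |Dfun m x y (n+m)| * |f (uMap m (n+m) y)| := by
      simp only [hEdef, Real.norm_eq_abs, abs_mul]
    rw [hEn]
    calc |Dfun m x y (n+m)| * |f (uMap m (n+m) y)|
        ≤ (|x - y| / (θ * ((n:ℝ)+1))) * M :=
          mul_le_mul hD (hfb _ (huy n)) (abs_nonneg _) (by positivity)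
      _ = (M * |x - y| / θ) / ((n:ℝ)+1) := by
          field_simp
  have hEt : Tendsto E atTop (𝓝 0) := by
    apply squeeze_zero_norm hEb
    have h1 := tendsto_const_div_atTop_nhds_zero_nat (M * |x - y| / θ)
    have h2 := h1.comp (tendsto_add_atTop_nat 1)
    refine h2.congr fun n => ?_
    simp only [Function.comp_apply]
    push_cast
    ring
  -- sum identity
  have hUx : Uop m f x = ∑' j, px j := rfl
  have hUy : Uop m f y = ∑' j, py j := rfl
  have hsum_sub : HasSum (fun j => px j - py j) (Uop m f x - Uop m f y) := by
    have h := hsx.hasSum.sub hsy.hasSum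
    rwa [← hUx, ← hUy] at h
  have htp := hsum_sub.tendsto_sum_nat
  have htg : Tendsto (fun n => ∑ j ∈ Finset.range n, g j) atTop
      (𝓝 (Uop m f x - Uop m f y)) := by
    have heqf : (fun n => ∑ j ∈ Finset.range n, g j)
        = fun n => (∑ j ∈ Finset.range n, (px j - py j)) - E 0 + E n := by
      funext n
      rw [htel n]
      ring
    rw [heqf, hE0]
    simpa using (htp.sub (tendsto_const_nhds (x := (0:ℝ)))).add hEt
  have hkey : ∑' j, g j = Uop m f x - Uop m f y :=
    tendsto_nhds_unique hsg.hasSum.tendsto_sum_nat htg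
  -- final estimate
  have hsgabs : Summable (fun j => |g j|) := hsg.abs
  have hmaj : Summable (fun j => (K* |x - y|) * ((m:ℝ) * sfun j)) := by
    have h := hssum.mul_left ((K* |x - y|)*(m:ℝ))
    exact h.congr fun j => by ring
  calc |Uop m f x - Uop m f y| = |∑' j, g j| := by rw [hkey]
    _ ≤ ∑' j, |g j| := by
        have h := norm_tsum_le_tsum_norm (f := g) (by simpa [Real.norm_eq_abs] using hsgabs)
        simpa [Real.norm_eq_abs] using h
    _ ≤ ∑' j, (K* |x - y|) * ((m:ℝ) * sfun j) := Summable.tsum_le_tsum hgb hsgabs hmaj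
    _ = (K* |x - y|) * ∑' j, ((m:ℝ) * sfun j) := tsum_mul_left
    _ = (K* |x - y|) * ((m:ℝ) * ∑' j, sfun j) := by rw [tsum_mul_left]
    _ = qConst m * K * |x - y| := by
        simp only [qConst, hsfundef]
        ring

end AuxLipschitz
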